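/- Necklace bracket formula for the second bracket: let n ≥ 1, let r, s ≥ 1, and let a₁,…,a_r and b₁,…,b_s be words in which each letter is one of the two symbols A, B. Define F₁(A,B) = tr(a₁⋯a_r) and F₂(A,B) = tr(b₁⋯b_s) by substituting the matrices A, B for the symbols. For each i let c_i = a_{i+1}⋯a_r a₁⋯a_{i−1} and for each j let d_j = b_{j+1}⋯b_s b₁⋯b_{j−1} (the products of the remaining letters in cyclic order, with A, B substituted). Then {F₁,F₂}_1 = Σ_{(i,j): a_i = B, b_j = A} tr(A c_i d_j) − Σ_{(i,j): a_i = A, b_j = B} tr(A d_j c_i) + Σ_{(i,j): a_i = B, b_j = B} tr(B[c_i, d_j]) identically on Mat_n(ℝ) × Mat_n(ℝ). -/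

import Mathlib

/- STATEMENT 6: necklace bracket formula for the second bracket. For words
a₁⋯a_r and b₁⋯b_s in the two letters A, B (a letter is encoded as a `Bool`:
`true` stands for the symbol A and `false` for the symbol B), define
F₁(A,B) = tr(a₁⋯a_r), F₂(A,B) = tr(b₁⋯b_s); then
{F₁,F₂}_1 = Σ_{(i,j): a_i = B, b_j = A} tr(A c_i d_j)
          − Σ_{(i,j): a_i = A, b_j = B} tr(A d_j c_i)
          + Σ_{(i,j): a_i = B, b_j = B} tr(B[c_i, d_j]),
where c_i = a_{i+1}⋯a_r a₁⋯a_{i−1} and d_j = b_{j+1}⋯b_s b₁⋯b_{j−1}. -/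

attribute [local instance] Matrix.frobeniusNormedAddCommGroup Matrix.frobeniusNormedSpace
attribute [local instance] Matrix.frobeniusNormedRing Matrix.frobeniusNormedAlgebra

/-- The space of real n×n matrices. -/
abbrev Mat (n : ℕ) := Matrix (Fin n) (Fin n) ℝ

/-- The first component ξ_F of the gradient of F : Mat_n × Mat_n → ℝ,
characterized by dF_{(A,B)}(V,W) = tr(ξ_F V) + tr(η_F W); encoded via the
Fréchet derivative as (ξ_F)_{ij} = dF(E_{ji}, 0), since tr(ξ E_{ji}) = ξ_{ij}. -/
noncomputable def gradA {n : ℕ} (F : Mat n × Mat n → ℝ) (p : Mat n × Mat n) : Mat n :=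
  Matrix.of fun i j => fderiv ℝ F p (Matrix.single j i 1, 0)

/-- The second component η_F of the gradient of F : Mat_n × Mat_n → ℝ. -/
noncomputable def gradB {n : ℕ} (F : Mat n × Mat n → ℝ) (p : Mat n × Mat n) : Mat n :=
  Matrix.of fun i j => fderiv ℝ F p (0, Matrix.single j i 1)

/-- Substitute the matrices A, B for the symbols: `true` ↦ A, `false` ↦ B. -/
def subst {n : ℕ} (A B : Mat n) : Bool → Mat n := fun s => if s then A else B

/-- The (ordered) product of the word w with A, B substituted for the symbols. -/
def wordProd {n : ℕ} (A B : Mat n) (w : List Bool) : Mat n := (w.map (subst A B)).prod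

/-- The word of the remaining letters in cyclic order after removing the letter
at (0-based) position i: a_{i+1}⋯a_r a₁⋯a_{i−1}. -/
def cyc (w : List Bool) (i : ℕ) : List Bool := w.drop (i + 1) ++ w.take i

/-- The trace function F(A,B) = tr(w₁⋯w_r) associated to a word w. -/
def traceWord (n : ℕ) (w : List Bool) : Mat n × Mat n → ℝ :=
  fun p => Matrix.trace (wordProd p.1 p.2 w)

/-- The second Poisson bracket
{F,G}_1(A,B) = tr(A(η_F ξ_G − η_G ξ_F) + B[η_F, η_G]). -/
noncomputable def bracket1 {n : ℕ} (F G : Mat n × Mat n → ℝ) (p : Mat n × Mat n) : ℝ :=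
  Matrix.trace (p.1 * (gradB F p * gradA G p - gradB G p * gradA F p)
    + p.2 * (gradB F p * gradB G p - gradB G p * gradB F p))

noncomputable def traceCLM (n : ℕ) : Mat n →L[ℝ] ℝ :=
  LinearMap.toContinuousLinearMap (Matrix.traceLinearMap (Fin n) ℝ ℝ)

noncomputable def wderiv {n : ℕ} (A B : Mat n) (w : List Bool) : (Mat n × Mat n) →L[ℝ] Mat n :=
  ∑ i : Fin w.length,
    ((ContinuousLinearMap.mul ℝ (Mat n)) (wordProd A B (w.take i))).comp
      (((ContinuousLinearMap.mul ℝ (Mat n)).flip (wordProd A B (w.drop (i+1)))).comp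
        (if w.get i then ContinuousLinearMap.fst ℝ (Mat n) (Mat n)
          else ContinuousLinearMap.snd ℝ (Mat n) (Mat n)))

lemma wderiv_apply {n : ℕ} (A B : Mat n) (w : List Bool) (V W : Mat n) :
    wderiv A B w (V, W) = ∑ i : Fin w.length,
      wordProd A B (w.take i) * (if w.get i then V else W) * wordProd A B (w.drop (i+1)) := by
  simp [wderiv, mul_assoc]
  erw [ContinuousLinearMap.sum_apply]
  congr 1; funext i
  by_cases h : w.get i <;> simp only [List.get_eq_getElem] at h <;> simp [h] <;> rfl

lemma trace_stdBasis_mul {n : ℕ} (M : Mat n) (i j : Fin n) :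
    Matrix.trace (Matrix.single j i (1:ℝ) * M) = M i j := by
  simp [Matrix.trace, Matrix.mul_apply, Matrix.single, Matrix.diag, ite_and]

lemma wordProd_nil {n : ℕ} (A B : Mat n) : wordProd A B [] = 1 := rfl

lemma wordProd_cons {n : ℕ} (A B : Mat n) (s : Bool) (t : List Bool) :
    wordProd A B (s :: t) = subst A B s * wordProd A B t := by
  simp [wordProd]

lemma wordProd_append {n : ℕ} (A B : Mat n) (u v : List Bool) :
    wordProd A B (u ++ v) = wordProd A B u * wordProd A B v := by
  simp [wordProd]

lemma hasFDeriv_word {n : ℕ} (A B : Mat n) (w : List Bool) :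
    HasFDerivAt (fun p : Mat n × Mat n => wordProd p.1 p.2 w) (wderiv A B w) (A, B) := by
  induction w with
  | nil =>
      have : (fun p : Mat n × Mat n => wordProd p.1 p.2 []) = fun _ => (1 : Mat n) := by
        funext p; rfl
      rw [this]
      have h0 : wderiv A B ([] : List Bool) = 0 := by
        simp [wderiv]; exact Finset.sum_empty
      rw [h0]
      exact hasFDerivAt_const _ _
  | cons s t ih =>
      have hs : HasFDerivAt (fun p : Mat n × Mat n => subst p.1 p.2 s)
          (if s then ContinuousLinearMap.fst ℝ (Mat n) (Mat n)
            else ContinuousLinearMap.snd ℝ (Mat n) (Mat n)) (A, B) := by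
        cases s <;> simp [subst] <;> [exact hasFDerivAt_snd; exact hasFDerivAt_fst]
      have h := hs.mul' ih
      have heq : (fun p : Mat n × Mat n => wordProd p.1 p.2 (s :: t)) =
          fun p : Mat n × Mat n => subst p.1 p.2 s * wordProd p.1 p.2 t := by
        funext p; exact wordProd_cons _ _ _ _
      rw [heq]
      refine HasFDerivAt.congr_fderiv h ?_
      refine ContinuousLinearMap.ext fun q => ?_
      obtain ⟨V, W⟩ := q
      show subst A B s • wderiv A B t (V, W) + (if s then ContinuousLinearMap.fst ℝ (Mat n) (Mat n)
          else ContinuousLinearMap.snd ℝ (Mat n) (Mat n)) (V, W) * wordProd A B t = wderiv A B (s :: t) (V, W)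
      symm
      rw [wderiv_apply A B (s :: t) V W, wderiv_apply A B t V W]
      show (∑ i : Fin (t.length + 1),
          (wordProd A B (List.take (↑i) (s :: t)) * if (s :: t).get i = true then V else W) *
            wordProd A B (List.drop (↑i + 1) (s :: t))) = _
      rw [Fin.sum_univ_succ]
      have h0 : (List.take (((0 : Fin (t.length+1))) : ℕ) (s :: t)) = [] := rfl
      have hd0 : List.drop (((0 : Fin (t.length+1)) : ℕ) + 1) (s :: t) = t := rfl
      rw [h0, hd0]
      have hget0 : (s :: t).get (0 : Fin (t.length+1)) = s := rfl
      rw [hget0, wordProd_nil, one_mul]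
      rw [add_comm]
      congr 1
      · -- tail terms
        have step : ∀ i : Fin t.length,
            (wordProd A B (List.take ((i.succ : Fin (t.length+1)) : ℕ) (s :: t)) *
              if (s :: t).get i.succ = true then V else W) *
              wordProd A B (List.drop (((i.succ : Fin (t.length+1)) : ℕ) + 1) (s :: t)) =
            subst A B s * ((wordProd A B (List.take (i : ℕ) t) *
              if t.get i = true then V else W) * wordProd A B (List.drop ((i : ℕ) + 1) t)) := by
          intro i
          have ht : List.take ((i.succ : Fin (t.length+1)) : ℕ) (s :: t)
              = s :: List.take (i : ℕ) t := rfl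
          have hd : List.drop (((i.succ : Fin (t.length+1)) : ℕ) + 1) (s :: t)
              = List.drop ((i : ℕ) + 1) t := rfl
          have hg : (s :: t).get i.succ = t.get i := rfl
          rw [ht, hd, hg, wordProd_cons]; simp [mul_assoc]
        calc (∑ i : Fin t.length,
                (wordProd A B (List.take ((i.succ : Fin (t.length+1)) : ℕ) (s :: t)) *
                  if (s :: t).get i.succ = true then V else W) *
                  wordProd A B (List.drop (((i.succ : Fin (t.length+1)) : ℕ) + 1) (s :: t)))
            = ∑ i : Fin t.length, subst A B s * ((wordProd A B (List.take (i : ℕ) t) *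
                if t.get i = true then V else W) * wordProd A B (List.drop ((i : ℕ) + 1) t)) :=
              Finset.sum_congr rfl fun i _ => step i
          _ = subst A B s • ∑ i : Fin t.length, (wordProd A B (List.take (i : ℕ) t) *
                if t.get i = true then V else W) * wordProd A B (List.drop ((i : ℕ) + 1) t) := by
              rw [Finset.smul_sum]; simp only [smul_eq_mul, mul_assoc]
      · -- head term
        cases s <;> simp [smul_eq_mul]

lemma hasFDeriv_traceWord {n : ℕ} (A B : Mat n) (w : List Bool) :
    HasFDerivAt (traceWord n w) ((traceCLM n).comp (wderiv A B w)) (A, B) := by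
  have h := ((traceCLM n).hasFDerivAt (x := wordProd A B w)).comp (A, B) (hasFDeriv_word A B w)
  exact h

lemma fderiv_traceWord_apply {n : ℕ} (A B : Mat n) (w : List Bool) (V W : Mat n) :
    fderiv ℝ (traceWord n w) (A, B) (V, W) =
      ∑ i : Fin w.length,
        Matrix.trace ((if w.get i then V else W) * wordProd A B (cyc w i)) := by
  rw [(hasFDeriv_traceWord A B w).fderiv]
  simp only [ContinuousLinearMap.comp_apply, wderiv_apply]
  rw [map_sum]
  have htr : ∀ M : Mat n, traceCLM n M = Matrix.trace M := fun _ => rfl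
  simp only [htr]
  refine Finset.sum_congr rfl fun i _ => ?_
  rw [cyc, wordProd_append, mul_assoc, Matrix.trace_mul_comm, mul_assoc]

lemma gradA_traceWord {n : ℕ} (A B : Mat n) (w : List Bool) :
    gradA (traceWord n w) (A, B) =
      ∑ i : Fin w.length, if w.get i = true then wordProd A B (cyc w i) else 0 := by
  ext i j
  simp only [gradA, Matrix.of_apply, fderiv_traceWord_apply, Finset.sum_apply, Matrix.sum_apply]
  refine Finset.sum_congr rfl fun k _ => ?_
  by_cases h : w.get k <;> simp only [List.get_eq_getElem] at h <;>
    simp [h, trace_stdBasis_mul]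

lemma gradB_traceWord {n : ℕ} (A B : Mat n) (w : List Bool) :
    gradB (traceWord n w) (A, B) =
      ∑ i : Fin w.length, if w.get i = false then wordProd A B (cyc w i) else 0 := by
  ext i j
  simp only [gradB, Matrix.of_apply, fderiv_traceWord_apply, Finset.sum_apply, Matrix.sum_apply]
  refine Finset.sum_congr rfl fun k _ => ?_
  by_cases h : w.get k <;> simp only [List.get_eq_getElem] at h <;>
    simp [h, trace_stdBasis_mul]

lemma expand_trace {n : ℕ} {r s : ℕ} (M : Mat n) (P : Fin r → Mat n) (Q : Fin s → Mat n)
    (c : Fin r → Prop) (d : Fin s → Prop) [DecidablePred c] [DecidablePred d] :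
    Matrix.trace (M * ((∑ i, if c i then P i else 0) * (∑ j, if d j then Q j else 0)))
      = ∑ i, ∑ j, if c i ∧ d j then Matrix.trace (M * (P i * Q j)) else 0 := by
  rw [Finset.sum_mul_sum, Matrix.mul_sum, Matrix.trace_sum]
  refine Finset.sum_congr rfl fun i _ => ?_
  rw [Matrix.mul_sum, Matrix.trace_sum]
  refine Finset.sum_congr rfl fun j _ => ?_
  by_cases hc : c i <;> by_cases hd : d j <;> simp [hc, hd]

theorem necklace_formula_bracket1 (n : ℕ) (hn : 1 ≤ n)
    (a b : List Bool) (ha : 1 ≤ a.length) (hb : 1 ≤ b.length) (A B : Mat n) :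
    bracket1 (traceWord n a) (traceWord n b) (A, B) =
      (∑ i : Fin a.length, ∑ j : Fin b.length,
        if a.get i = false ∧ b.get j = true then
          Matrix.trace (A * (wordProd A B (cyc a i) * wordProd A B (cyc b j))) else 0)
      - (∑ i : Fin a.length, ∑ j : Fin b.length,
        if a.get i = true ∧ b.get j = false then
          Matrix.trace (A * (wordProd A B (cyc b j) * wordProd A B (cyc a i))) else 0)
      + (∑ i : Fin a.length, ∑ j : Fin b.length,
        if a.get i = false ∧ b.get j = false then
          Matrix.trace (B * (wordProd A B (cyc a i) * wordProd A B (cyc b j)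
            - wordProd A B (cyc b j) * wordProd A B (cyc a i))) else 0) := by
  have hP : ∀ i : Fin a.length, wordProd A B (cyc a i) = wordProd A B (cyc a i) := fun _ => rfl
  have hbr : bracket1 (traceWord n a) (traceWord n b) (A, B) =
      Matrix.trace (A * ((∑ i : Fin a.length, if a.get i = false then wordProd A B (cyc a i) else 0)
          * (∑ j : Fin b.length, if b.get j = true then wordProd A B (cyc b j) else 0)))
      - Matrix.trace (A * ((∑ j : Fin b.length, if b.get j = false then wordProd A B (cyc b j) else 0)
          * (∑ i : Fin a.length, if a.get i = true then wordProd A B (cyc a i) else 0)))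
      + (Matrix.trace (B * ((∑ i : Fin a.length, if a.get i = false then wordProd A B (cyc a i) else 0)
          * (∑ j : Fin b.length, if b.get j = false then wordProd A B (cyc b j) else 0)))
        - Matrix.trace (B * ((∑ j : Fin b.length, if b.get j = false then wordProd A B (cyc b j) else 0)
          * (∑ i : Fin a.length, if a.get i = false then wordProd A B (cyc a i) else 0)))) := by
    rw [bracket1, gradA_traceWord, gradB_traceWord, gradA_traceWord, gradB_traceWord]
    simp only [mul_sub, Matrix.trace_add, Matrix.trace_sub]
  have h1 : Matrix.trace (A * ((∑ i : Fin a.length, if a.get i = false then wordProd A B (cyc a i) else 0)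
          * (∑ j : Fin b.length, if b.get j = true then wordProd A B (cyc b j) else 0)))
      = ∑ i : Fin a.length, ∑ j : Fin b.length,
        if a.get i = false ∧ b.get j = true then
          Matrix.trace (A * (wordProd A B (cyc a i) * wordProd A B (cyc b j))) else 0 :=
    expand_trace A _ _ _ _
  have h2 : Matrix.trace (A * ((∑ j : Fin b.length, if b.get j = false then wordProd A B (cyc b j) else 0)
          * (∑ i : Fin a.length, if a.get i = true then wordProd A B (cyc a i) else 0)))
      = ∑ i : Fin a.length, ∑ j : Fin b.length,
        if a.get i = true ∧ b.get j = false then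
          Matrix.trace (A * (wordProd A B (cyc b j) * wordProd A B (cyc a i))) else 0 := by
    rw [expand_trace, Finset.sum_comm]
    refine Finset.sum_congr rfl fun i _ => Finset.sum_congr rfl fun j _ => ?_
    apply if_congr and_comm rfl rfl
  have h3 : Matrix.trace (B * ((∑ i : Fin a.length, if a.get i = false then wordProd A B (cyc a i) else 0)
          * (∑ j : Fin b.length, if b.get j = false then wordProd A B (cyc b j) else 0)))
        - Matrix.trace (B * ((∑ j : Fin b.length, if b.get j = false then wordProd A B (cyc b j) else 0)
          * (∑ i : Fin a.length, if a.get i = false then wordProd A B (cyc a i) else 0)))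
      = ∑ i : Fin a.length, ∑ j : Fin b.length,
        if a.get i = false ∧ b.get j = false then
          Matrix.trace (B * (wordProd A B (cyc a i) * wordProd A B (cyc b j)
            - wordProd A B (cyc b j) * wordProd A B (cyc a i))) else 0 := by
    rw [expand_trace, expand_trace, Finset.sum_comm (γ := Fin b.length), ← Finset.sum_sub_distrib]
    refine Finset.sum_congr rfl fun i _ => ?_
    rw [← Finset.sum_sub_distrib]
    refine Finset.sum_congr rfl fun j _ => ?_
    by_cases hc : a.get i = false <;> by_cases hd : b.get j = false <;>
      simp only [List.get_eq_getElem] at hc hd <;>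
      simp [hc, hd, and_comm, mul_sub, Matrix.trace_sub]
  rw [hbr, h1, h2, h3]
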